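/- Let m, m' ∈ ℕ, let A be a countably m-rectifiable metric space and let B be an m'-negligible metric space. Then the Cartesian product A × B, equipped with the product metric (the sup metric d((x,x'),(y,y')) = max(d_A(x,y), d_B(x',y')), which is bi-Lipschitz equivalent to every p-product metric for p ∈ [1,∞)), is (m+m')-negligible: its (m+m')-dimensional Hausdorff measure vanishes. -/

import Mathlib

open Set MeasureTheory

/-- A subset `A` of a metric space is countably `m`-rectifiable iff it is the union of the
images of countably many Lipschitz maps, each defined on some subset of `ℝ^m`. -/
def CountablyRectifiable (m : ℕ) {X : Type*} [MetricSpace X] (A : Set X) : Prop :=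
  ∃ (S : ℕ → Set (EuclideanSpace ℝ (Fin m))) (f : ∀ i, S i → X) (C : ℕ → NNReal),
    (∀ i, LipschitzWith (C i) (f i)) ∧ A = ⋃ i, Set.range (f i)

/-- A metric space is `s`-negligible iff its `s`-dimensional Hausdorff measure
(w.r.t. the Borel σ-algebra) vanishes. -/
def IsNegligibleSpace (X : Type*) [MetricSpace X] (s : ℝ) : Prop :=
  letI := borel X
  letI : BorelSpace X := ⟨rfl⟩
  μH[s] (Set.univ : Set X) = 0

section Auxiliary

open Function
open scoped ENNReal NNReal

lemma diam_prod_le' {X Y : Type*} [PseudoEMetricSpace X] [PseudoEMetricSpace Y]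
    (s : Set X) (t : Set Y) :
    EMetric.diam (s ×ˢ t) ≤ max (EMetric.diam s) (EMetric.diam t) := by
  refine EMetric.diam_le fun p hp q hq => ?_
  rw [Prod.edist_eq]
  exact max_le_max (EMetric.edist_le_diam_of_mem hp.1 hq.1)
    (EMetric.edist_le_diam_of_mem hp.2 hq.2)

lemma hausdorff_le_of_covers {X : Type*} [MetricSpace X] [MeasurableSpace X] [BorelSpace X]
    {d : ℝ} (hd : 0 < d) (s : Set X) (M : ℝ≥0∞)
    (H : ∀ r : ℝ≥0∞, 0 < r → ∃ (ι : Type) (_ : Countable ι) (t : ι → Set X),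
      (s ⊆ ⋃ i, t i) ∧ (∀ i, EMetric.diam (t i) ≤ r) ∧ ∑' i, EMetric.diam (t i) ^ d ≤ M) :
    μH[d] s ≤ M := by
  rw [MeasureTheory.Measure.hausdorffMeasure_apply]
  refine iSup₂_le fun r hr => ?_
  obtain ⟨ι, hι, t, hcov, hdiam, hsum⟩ := H r hr
  obtain ⟨g, hg⟩ := exists_injective_nat ι
  set t' : ℕ → Set X := fun n => ⋃ (i : ι) (_ : g i = n), t i with ht'
  have ht'g : ∀ i, t' (g i) = t i := fun i => by
    apply subset_antisymm
    · exact iUnion₂_subset fun i' hi' => by rw [hg hi']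
    · exact subset_iUnion₂ (s := fun i' (_ : g i' = g i) => t i') i rfl
  have hdiam' : ∀ n, EMetric.diam (t' n) ≤ r := by
    intro n
    refine EMetric.diam_le fun x hx y hy => ?_
    simp only [t', mem_iUnion] at hx hy
    obtain ⟨i, hi, hxi⟩ := hx
    obtain ⟨i', hi', hyi⟩ := hy
    cases hg (hi.trans hi'.symm)
    exact (EMetric.edist_le_diam_of_mem hxi hyi).trans (hdiam i)
  refine iInf₂_le_of_le t' (fun x hx => ?_) (iInf_le_of_le hdiam' ?_)
  · obtain ⟨i, hxi⟩ := mem_iUnion.1 (hcov hx)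
    exact mem_iUnion.2 ⟨g i, (ht'g i).symm ▸ hxi⟩
  · calc ∑' n, ⨆ _ : (t' n).Nonempty, EMetric.diam (t' n) ^ d
        ≤ ∑' n, EMetric.diam (t' n) ^ d :=
          ENNReal.tsum_le_tsum fun n => iSup_le fun _ => le_rfl
      _ = ∑' i, EMetric.diam (t i) ^ d := by
          rw [← hg.tsum_eq]
          · exact tsum_congr fun i => by rw [ht'g]
          · intro n hn
            by_contra h
            apply hn
            have hempty : t' n = ∅ := by
              simp only [t', iUnion_eq_empty]
              intro i
              have : g i ≠ n := fun hgi => h ⟨i, hgi⟩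
              simp [this]
            simp [hempty, ENNReal.zero_rpow_of_pos hd, EMetric.diam, Metric.ediam_empty, hd]
      _ ≤ M := hsum

lemma cube_cover (m n : ℕ) {δ : ℝ} (hδ : 0 < δ) :
    ∃ (k : ℕ) (c : (Fin m → Fin k) → Set (Fin m → ℝ)),
      (k : ℝ) * δ ≤ 2 * n + 2 * δ ∧
      (∀ v, EMetric.diam (c v) ≤ ENNReal.ofReal δ) ∧
      (Set.pi Set.univ (fun _ : Fin m => Icc (-(n : ℝ)) n) ⊆ ⋃ v, c v) := by
  set k : ℕ := ⌈2 * (n : ℝ) / δ⌉₊ + 1 with hk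
  have hkpos : 0 < k := Nat.succ_pos _
  set s : ℝ := 2 * n / k with hs
  have hs0 : 0 ≤ s := by positivity
  have hks : (k : ℝ) * s = 2 * n := by
    rw [hs]; field_simp
  have hceil : 2 * (n : ℝ) / δ ≤ (k : ℝ) := by
    refine (Nat.le_ceil _).trans ?_
    have hle : ⌈2 * (n : ℝ) / δ⌉₊ ≤ k := by rw [hk]; exact Nat.le_succ _
    exact_mod_cast hle
  have hsδ : s ≤ δ := by
    rw [hs, div_le_iff₀ (by exact_mod_cast hkpos)]
    calc 2 * (n : ℝ) = 2 * n / δ * δ := by field_simp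
      _ ≤ k * δ := by gcongr
      _ = δ * k := by ring
  have hkb : (k : ℝ) * δ ≤ 2 * n + 2 * δ := by
    have h1 : (⌈2 * (n : ℝ) / δ⌉₊ : ℝ) < 2 * n / δ + 1 := Nat.ceil_lt_add_one (by positivity)
    have h2 : (k : ℝ) ≤ 2 * n / δ + 2 := by
      rw [hk]; push_cast; linarith
    calc (k : ℝ) * δ ≤ (2 * n / δ + 2) * δ := by gcongr
      _ = 2 * n + 2 * δ := by field_simp
  refine ⟨k, fun v => Set.pi Set.univ
      (fun i => Icc (-(n : ℝ) + v i * s) (-(n : ℝ) + (v i + 1) * s)), hkb, ?_, ?_⟩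
  · intro v
    refine EMetric.diam_pi_le_of_le fun i => ?_
    rw [Real.ediam_Icc]
    have : (-(n : ℝ) + (v i + 1) * s) - (-(n : ℝ) + v i * s) = s := by ring
    rw [this]
    exact ENNReal.ofReal_le_ofReal hsδ
  · intro x hx
    simp only [mem_pi, mem_univ, forall_true_left] at hx
    rcases Nat.eq_zero_or_pos n with hn | hn
    · subst hn
      refine mem_iUnion.2 ⟨fun _ => ⟨0, hkpos⟩, ?_⟩
      intro i _
      have hx0 : x i = 0 := le_antisymm (by simpa using (hx i).2) (by simpa using (hx i).1)
      have hs' : s = 0 := by rw [hs]; simp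
      simp [hx0, hs']
    · have hspos : 0 < s := by
        rw [hs]; positivity
      set j : Fin m → ℕ := fun i => min ⌊(x i + n) / s⌋₊ (k - 1) with hj
      refine mem_iUnion.2 ⟨fun i => ⟨j i, lt_of_le_of_lt (min_le_right _ _)
        (Nat.sub_lt hkpos one_pos)⟩, ?_⟩
      intro i _
      have hu0 : 0 ≤ x i + n := by have := (hx i).1; linarith
      have hu2n : x i + n ≤ 2 * n := by have := (hx i).2; linarith
      constructor
      · have h1 : (j i : ℝ) ≤ ⌊(x i + n) / s⌋₊ := by
          exact_mod_cast min_le_left _ _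
        have h2 : (⌊(x i + n) / s⌋₊ : ℝ) ≤ (x i + n) / s := Nat.floor_le (by positivity)
        have : (j i : ℝ) * s ≤ x i + n := by
          calc (j i : ℝ) * s ≤ (x i + n) / s * s := by gcongr; linarith
            _ = x i + n := by field_simp
        simp only []
        linarith
      · rcases le_or_gt ⌊(x i + n) / s⌋₊ (k - 1) with h | h
        · have hji : j i = ⌊(x i + n) / s⌋₊ := min_eq_left h
          have h3 : (x i + n) / s < ⌊(x i + n) / s⌋₊ + 1 := Nat.lt_floor_add_one _
          have : x i + n < ((j i : ℝ) + 1) * s := by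
            rw [hji]
            calc x i + n = (x i + n) / s * s := by field_simp
              _ < ((⌊(x i + n) / s⌋₊ : ℝ) + 1) * s := by gcongr
          simp only []
          linarith
        · have hji : j i = k - 1 := min_eq_right h.le
          have hcast : ((k - 1 : ℕ) : ℝ) + 1 = k := by
            rw [Nat.cast_sub hkpos]; ring
          have : ((j i : ℝ) + 1) * s = 2 * n := by
            rw [hji, hcast, hks]
          simp only []
          linarith

lemma exists_cover_of_null {Y : Type*} [MetricSpace Y] [MeasurableSpace Y] [BorelSpace Y]
    {m' : ℕ} (hm' : 0 < m') (hY : μH[(m' : ℝ)] (univ : Set Y) = 0)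
    {ε : ℝ} (hε : 0 < ε) :
    ∃ t : ℕ → Set Y, (univ : Set Y) ⊆ (⋃ j, t j) ∧
      (∀ j, EMetric.diam (t j) ≤ ENNReal.ofReal ε) ∧
      ∑' j, EMetric.diam (t j) ^ (m' : ℝ) < ENNReal.ofReal ε := by
  rw [MeasureTheory.Measure.hausdorffMeasure_apply] at hY
  have h0 : (⨅ (t : ℕ → Set Y) (_ : (univ : Set Y) ⊆ ⋃ j, t j)
      (_ : ∀ j, EMetric.diam (t j) ≤ ENNReal.ofReal ε),
      ∑' j, ⨆ _ : (t j).Nonempty, EMetric.diam (t j) ^ (m' : ℝ)) = 0 := by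
    refine le_antisymm ?_ zero_le
    rw [← hY]
    exact le_iSup₂ (f := fun (r : ℝ≥0∞) (_ : 0 < r) =>
      ⨅ (t : ℕ → Set Y) (_ : (univ : Set Y) ⊆ ⋃ j, t j)
        (_ : ∀ j, EMetric.diam (t j) ≤ r),
        ∑' j, ⨆ _ : (t j).Nonempty, EMetric.diam (t j) ^ (m' : ℝ))
      (ENNReal.ofReal ε) (ENNReal.ofReal_pos.2 hε)
  have hlt := lt_of_le_of_lt h0.le (ENNReal.ofReal_pos.2 hε)
  rw [iInf_lt_iff] at hlt
  obtain ⟨t, hlt⟩ := hlt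
  rw [iInf_lt_iff] at hlt
  obtain ⟨hcov, hlt⟩ := hlt
  rw [iInf_lt_iff] at hlt
  obtain ⟨hdiam, hlt⟩ := hlt
  refine ⟨t, hcov, hdiam, ?_⟩
  refine lt_of_le_of_lt (le_of_eq (tsum_congr fun j => ?_)) hlt
  by_cases hne : (t j).Nonempty
  · rw [iSup_pos hne]
  · rw [not_nonempty_iff_eq_empty] at hne
    have hpos : (0 : ℝ) < (m' : ℝ) := by exact_mod_cast hm'
    simp [hne, ENNReal.zero_rpow_of_pos hpos, EMetric.diam, Metric.ediam_empty, hm'.ne']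

lemma cube_prod_null {Y : Type*} [MetricSpace Y] [MeasurableSpace Y] [BorelSpace Y]
    (m m' : ℕ) (hm' : 0 < m')
    [MeasurableSpace ((Fin m → ℝ) × Y)] [BorelSpace ((Fin m → ℝ) × Y)]
    (hY : μH[(m' : ℝ)] (univ : Set Y) = 0) (n : ℕ) :
    μH[(m : ℝ) + m']
      ((Set.pi Set.univ (fun _ : Fin m => Icc (-(n : ℝ)) n)) ×ˢ (univ : Set Y)) = 0 := by
  set d : ℝ := (m : ℝ) + m' with hd_def
  have hm'R : (0 : ℝ) < (m' : ℝ) := by exact_mod_cast hm'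
  have hd : 0 < d := by positivity
  set Q : Set (Fin m → ℝ) := Set.pi Set.univ (fun _ : Fin m => Icc (-(n : ℝ)) n) with hQ
  have key : ∀ ε : ℝ, 0 < ε → ε ≤ 1 →
      μH[d] (Q ×ˢ (univ : Set Y)) ≤ ENNReal.ofReal ((2 * n + 2) ^ m * (3 * ε)) := by
    intro ε hε hε1
    apply hausdorff_le_of_covers hd
    intro r hr
    set ε₂ : ℝ := min ε (min r 1).toReal with hε₂def
    have hmr1 : min r 1 ≠ ⊤ := ne_top_of_le_ne_top ENNReal.one_ne_top (min_le_right _ _)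
    have hmrpos : 0 < min r 1 := lt_min hr zero_lt_one
    have hε₂pos : 0 < ε₂ := lt_min hε (ENNReal.toReal_pos hmrpos.ne' hmr1)
    have hε₂ε : ε₂ ≤ ε := min_le_left _ _
    have hε₂1 : ε₂ ≤ 1 := by
      refine le_trans (min_le_right _ _) ?_
      have := ENNReal.toReal_mono ENNReal.one_ne_top (min_le_right r 1)
      simpa using this
    have hofr : ENNReal.ofReal ε₂ ≤ r := by
      calc ENNReal.ofReal ε₂ ≤ ENNReal.ofReal (min r 1).toReal :=
            ENNReal.ofReal_le_ofReal (min_le_right _ _)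
        _ = min r 1 := ENNReal.ofReal_toReal hmr1
        _ ≤ r := min_le_left _ _
    obtain ⟨t, hcovY, hdiamY, hsumY⟩ := exists_cover_of_null hm' hY hε₂pos
    set a : ℕ → ℝ := fun j => (EMetric.diam (t j)).toReal with ha
    have hdne : ∀ j, EMetric.diam (t j) ≠ ⊤ :=
      fun j => ne_top_of_le_ne_top ENNReal.ofReal_ne_top (hdiamY j)
    have ha0 : ∀ j, 0 ≤ a j := fun j => ENNReal.toReal_nonneg
    have ha1 : ∀ j, a j ≤ ε₂ := fun j => by
      have := ENNReal.toReal_mono ENNReal.ofReal_ne_top (hdiamY j)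
      rwa [ENNReal.toReal_ofReal hε₂pos.le] at this
    set b : ℕ → ℝ := fun j => ε₂ * (2⁻¹ : ℝ) ^ (j + 1) with hb
    have hbpos : ∀ j, 0 < b j := fun j => by positivity
    have hb1 : ∀ j, b j ≤ ε₂ := fun j => by
      have h1 : ((2 : ℝ)⁻¹) ^ (j + 1) ≤ 1 := pow_le_one₀ (by norm_num) (by norm_num)
      calc b j = ε₂ * (2⁻¹) ^ (j + 1) := rfl
        _ ≤ ε₂ * 1 := by gcongr
        _ = ε₂ := mul_one _
    set δ : ℕ → ℝ := fun j => max (a j) (b j) with hδ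
    have hδpos : ∀ j, 0 < δ j := fun j => lt_of_lt_of_le (hbpos j) (le_max_right _ _)
    have hδ1 : ∀ j, δ j ≤ 1 := fun j => max_le ((ha1 j).trans hε₂1) ((hb1 j).trans hε₂1)
    have hδε : ∀ j, δ j ≤ ε₂ := fun j => max_le (ha1 j) (hb1 j)
    choose k c hkb hcdiam hccov using fun j => cube_cover m n (hδpos j)
    refine ⟨(Σ j : ℕ, (Fin m → Fin (k j))), inferInstance,
      fun p => c p.1 p.2 ×ˢ t p.1, ?_, ?_, ?_⟩
    · rintro ⟨x, y⟩ ⟨hx, -⟩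
      obtain ⟨j, hj⟩ := mem_iUnion.1 (hcovY (mem_univ y))
      obtain ⟨v, hv⟩ := mem_iUnion.1 (hccov j hx)
      exact mem_iUnion.2 ⟨⟨j, v⟩, mem_prod.2 ⟨hv, hj⟩⟩
    · rintro ⟨j, v⟩
      have hdtj : EMetric.diam (t j) ≤ ENNReal.ofReal (δ j) := by
        calc EMetric.diam (t j) = ENNReal.ofReal (a j) := (ENNReal.ofReal_toReal (hdne j)).symm
          _ ≤ ENNReal.ofReal (δ j) := ENNReal.ofReal_le_ofReal (le_max_left _ _)
      calc EMetric.diam (c j v ×ˢ t j)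
          ≤ max (EMetric.diam (c j v)) (EMetric.diam (t j)) := diam_prod_le' _ _
        _ ≤ ENNReal.ofReal (δ j) := max_le (hcdiam j v) hdtj
        _ ≤ ENNReal.ofReal ε₂ := ENNReal.ofReal_le_ofReal (hδε j)
        _ ≤ r := hofr
    · have hcast : ∀ x : ℝ≥0∞, x ^ d = x ^ (m + m' : ℕ) := fun x => by
        rw [← ENNReal.rpow_natCast x (m + m')]
        congr 1
        push_cast
        ring
      have hdtj : ∀ j, EMetric.diam (t j) ≤ ENNReal.ofReal (δ j) := fun j => by
        calc EMetric.diam (t j) = ENNReal.ofReal (a j) := (ENNReal.ofReal_toReal (hdne j)).symm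
          _ ≤ ENNReal.ofReal (δ j) := ENNReal.ofReal_le_ofReal (le_max_left _ _)
      calc ∑' (p : Σ j : ℕ, (Fin m → Fin (k j))), EMetric.diam (c p.1 p.2 ×ˢ t p.1) ^ d
          = ∑' (j : ℕ) (v : Fin m → Fin (k j)), EMetric.diam (c j v ×ˢ t j) ^ d :=
            ENNReal.tsum_sigma' _
        _ ≤ ∑' (j : ℕ) (_ : Fin m → Fin (k j)), ENNReal.ofReal (δ j) ^ d := by
            refine ENNReal.tsum_le_tsum fun j => ENNReal.tsum_le_tsum fun v => ?_
            refine ENNReal.rpow_le_rpow ?_ hd.le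
            calc EMetric.diam (c j v ×ˢ t j)
                ≤ max (EMetric.diam (c j v)) (EMetric.diam (t j)) := diam_prod_le' _ _
              _ ≤ ENNReal.ofReal (δ j) := max_le (hcdiam j v) (hdtj j)
        _ = ∑' (j : ℕ), ((k j ^ m : ℕ) : ℝ≥0∞) * ENNReal.ofReal (δ j) ^ d := by
            refine tsum_congr fun j => ?_
            rw [tsum_fintype]
            simp [Finset.sum_const, nsmul_eq_mul]
        _ ≤ ∑' (j : ℕ), ENNReal.ofReal ((2 * n + 2) ^ m) *
              (ENNReal.ofReal (a j ^ m') + ENNReal.ofReal (b j ^ m')) := by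
            refine ENNReal.tsum_le_tsum fun j => ?_
            have hreal : (k j : ℝ) ^ m * δ j ^ (m + m') ≤ (2 * n + 2) ^ m * δ j ^ m' := by
              have h1 : ((k j : ℝ) * δ j) ^ m ≤ (2 * n + 2) ^ m := by
                apply pow_le_pow_left₀ (by positivity)
                calc (k j : ℝ) * δ j ≤ 2 * n + 2 * δ j := hkb j
                  _ ≤ 2 * n + 2 := by nlinarith [hδ1 j]
              calc (k j : ℝ) ^ m * δ j ^ (m + m')
                  = ((k j : ℝ) * δ j) ^ m * δ j ^ m' := by rw [mul_pow, pow_add]; ring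
                _ ≤ (2 * n + 2) ^ m * δ j ^ m' :=
                    mul_le_mul_of_nonneg_right h1 (by positivity)
            have hmax : δ j ^ m' ≤ a j ^ m' + b j ^ m' := by
              rcases le_total (a j) (b j) with h | h
              · have hh : δ j = b j := max_eq_right h
                rw [hh]
                exact le_add_of_nonneg_left (by positivity)
              · have hh : δ j = a j := max_eq_left h
                rw [hh]
                exact le_add_of_nonneg_right (by positivity)
            calc ((k j ^ m : ℕ) : ℝ≥0∞) * ENNReal.ofReal (δ j) ^ d
                = ENNReal.ofReal ((k j : ℝ) ^ m * δ j ^ (m + m')) := by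
                  rw [hcast, ← ENNReal.ofReal_pow (hδpos j).le, ← ENNReal.ofReal_natCast,
                    ← ENNReal.ofReal_mul (by positivity)]
                  push_cast
                  ring_nf
              _ ≤ ENNReal.ofReal ((2 * n + 2) ^ m * δ j ^ m') := ENNReal.ofReal_le_ofReal hreal
              _ = ENNReal.ofReal ((2 * n + 2) ^ m) * ENNReal.ofReal (δ j ^ m') := by
                  rw [ENNReal.ofReal_mul (by positivity)]
              _ ≤ ENNReal.ofReal ((2 * n + 2) ^ m) *
                    (ENNReal.ofReal (a j ^ m') + ENNReal.ofReal (b j ^ m')) := by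
                  gcongr
                  rw [← ENNReal.ofReal_add (by positivity) (by positivity)]
                  exact ENNReal.ofReal_le_ofReal hmax
        _ = ENNReal.ofReal ((2 * n + 2) ^ m) *
              ((∑' j, ENNReal.ofReal (a j ^ m')) + ∑' j, ENNReal.ofReal (b j ^ m')) := by
            rw [ENNReal.tsum_mul_left, ENNReal.tsum_add]
        _ ≤ ENNReal.ofReal ((2 * n + 2) ^ m) * (ENNReal.ofReal ε₂ + 2 * ENNReal.ofReal ε₂) := by
            gcongr
            · have hh : ∀ j, ENNReal.ofReal (a j ^ m') = EMetric.diam (t j) ^ (m' : ℝ) :=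
                fun j => by
                  rw [ENNReal.ofReal_pow (ha0 j), ENNReal.ofReal_toReal (hdne j),
                    ← ENNReal.rpow_natCast]
              rw [tsum_congr hh]
              exact hsumY.le
            · have hbb : ∀ j, ENNReal.ofReal (b j ^ m') ≤
                  ENNReal.ofReal ε₂ * (2⁻¹ : ℝ≥0∞) ^ (j + 1) := by
                intro j
                have h1 : b j ^ m' ≤ b j := by
                  calc b j ^ m' ≤ b j ^ 1 :=
                        pow_le_pow_of_le_one (hbpos j).le ((hb1 j).trans hε₂1) hm'
                    _ = b j := pow_one _
                calc ENNReal.ofReal (b j ^ m') ≤ ENNReal.ofReal (b j) :=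
                      ENNReal.ofReal_le_ofReal h1
                  _ = ENNReal.ofReal ε₂ * ENNReal.ofReal ((2⁻¹ : ℝ) ^ (j + 1)) := by
                      rw [← ENNReal.ofReal_mul hε₂pos.le]
                  _ = ENNReal.ofReal ε₂ * (2⁻¹ : ℝ≥0∞) ^ (j + 1) := by
                      rw [ENNReal.ofReal_pow (by norm_num)]
                      congr 2
                      rw [ENNReal.ofReal_inv_of_pos (by norm_num)]
                      norm_num
              calc ∑' j, ENNReal.ofReal (b j ^ m')
                  ≤ ∑' j, ENNReal.ofReal ε₂ * (2⁻¹ : ℝ≥0∞) ^ (j + 1) :=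
                    ENNReal.tsum_le_tsum hbb
                _ = ENNReal.ofReal ε₂ * ∑' j, (2⁻¹ : ℝ≥0∞) ^ (j + 1) := ENNReal.tsum_mul_left
                _ ≤ ENNReal.ofReal ε₂ * 2 := by
                    gcongr
                    calc ∑' (j : ℕ), (2⁻¹ : ℝ≥0∞) ^ (j + 1)
                        ≤ ∑' (j : ℕ), (2⁻¹ : ℝ≥0∞) ^ j :=
                        ENNReal.tsum_le_tsum fun j =>
                          pow_le_pow_right_of_le_one' (by norm_num) (Nat.le_succ j)
                      _ = (1 - 2⁻¹)⁻¹ := ENNReal.tsum_geometric _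
                      _ = 2 := by norm_num [ENNReal.one_sub_inv_two]
                _ = 2 * ENNReal.ofReal ε₂ := mul_comm _ _
        _ ≤ ENNReal.ofReal ((2 * n + 2) ^ m * (3 * ε)) := by
            rw [ENNReal.ofReal_mul (by positivity)]
            gcongr
            have hh : (2 : ℝ≥0∞) * ENNReal.ofReal ε₂ = ENNReal.ofReal (2 * ε₂) := by
              rw [ENNReal.ofReal_mul (by norm_num), ENNReal.ofReal_ofNat]
            rw [hh, ← ENNReal.ofReal_add hε₂pos.le (by positivity)]
            exact ENNReal.ofReal_le_ofReal (by linarith)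
  by_contra hne
  have hfin : μH[d] (Q ×ˢ (univ : Set Y)) ≤ ENNReal.ofReal ((2 * n + 2) ^ m * (3 * 1)) :=
    key 1 one_pos le_rfl
  have htop : μH[d] (Q ×ˢ (univ : Set Y)) ≠ ⊤ :=
    ne_top_of_le_ne_top ENNReal.ofReal_ne_top hfin
  set μ0 := μH[d] (Q ×ˢ (univ : Set Y)) with hμ0
  have hpos : 0 < μ0.toReal := ENNReal.toReal_pos hne htop
  set cst : ℝ := (2 * (n : ℝ) + 2) ^ m with hcst
  have hcstpos : 0 < cst := by positivity
  set ε : ℝ := min 1 (μ0.toReal / (6 * cst)) with hεdef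
  have hεpos : 0 < ε := lt_min one_pos (div_pos hpos (by positivity))
  have hkey := key ε hεpos (min_le_left _ _)
  have h2 : ENNReal.ofReal (cst * (3 * ε)) ≤ ENNReal.ofReal (μ0.toReal / 2) := by
    apply ENNReal.ofReal_le_ofReal
    have hmin : ε ≤ μ0.toReal / (6 * cst) := min_le_right _ _
    calc cst * (3 * ε) ≤ cst * (3 * (μ0.toReal / (6 * cst))) := by gcongr
      _ = μ0.toReal / 2 := by field_simp; ring
  have h3 : ENNReal.ofReal (μ0.toReal / 2) = μ0 / 2 := by
    rw [ENNReal.ofReal_div_of_pos two_pos, ENNReal.ofReal_toReal htop, ENNReal.ofReal_ofNat]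
  have hcontr : μ0 ≤ μ0 / 2 := by
    refine hkey.trans ?_
    exact (by push_cast; exact h2 : ENNReal.ofReal ((2 * n + 2) ^ m * (3 * ε)) ≤ _).trans_eq h3
  exact absurd hcontr (not_le.2 (ENNReal.half_lt_self hne htop))

lemma pi_prod_null {Y : Type*} [MetricSpace Y] [MeasurableSpace Y] [BorelSpace Y]
    (m m' : ℕ) (hm' : 0 < m')
    [MeasurableSpace ((Fin m → ℝ) × Y)] [BorelSpace ((Fin m → ℝ) × Y)]
    (hY : μH[(m' : ℝ)] (univ : Set Y) = 0) :
    μH[(m : ℝ) + m'] (univ : Set ((Fin m → ℝ) × Y)) = 0 := by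
  have hsub : (univ : Set ((Fin m → ℝ) × Y)) ⊆
      ⋃ n : ℕ, (Set.pi Set.univ (fun _ : Fin m => Icc (-(n : ℝ)) n)) ×ˢ (univ : Set Y) := by
    rintro ⟨x, y⟩ -
    refine mem_iUnion.2 ⟨⌈‖x‖⌉₊, mem_prod.2 ⟨?_, trivial⟩⟩
    intro i _
    have h1 : |x i| ≤ ‖x‖ := by
      rw [← Real.norm_eq_abs]
      exact norm_le_pi_norm x i
    have h2 : ‖x‖ ≤ (⌈‖x‖⌉₊ : ℝ) := Nat.le_ceil _
    have := abs_le.1 (h1.trans h2)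
    exact ⟨this.1, this.2⟩
  refine le_antisymm ?_ zero_le
  calc μH[(m : ℝ) + m'] (univ : Set ((Fin m → ℝ) × Y))
      ≤ μH[(m : ℝ) + m'] (⋃ n : ℕ,
          (Set.pi Set.univ (fun _ : Fin m => Icc (-(n : ℝ)) n)) ×ˢ (univ : Set Y)) :=
        measure_mono hsub
    _ = 0 := measure_iUnion_null fun n => cube_prod_null m m' hm' hY n

lemma lipschitzWith_prodMap_left {X X' Y : Type*} [PseudoEMetricSpace X] [PseudoEMetricSpace X']
    [PseudoEMetricSpace Y] {K : ℝ≥0} {F : X → X'} (hF : LipschitzWith K F) :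
    LipschitzWith (max K 1) (Prod.map F (id : Y → Y)) := by
  have h1 : LipschitzWith K (fun p : X × Y => F p.1) := by
    simpa [Function.comp_def] using hF.comp (LipschitzWith.prod_fst (α := X) (β := Y))
  have h2 : LipschitzWith 1 (fun p : X × Y => p.2) := LipschitzWith.prod_snd
  exact h1.prodMk h2

end Auxiliary

/-- **Negligibility and product.** If `A` is a countably `m`-rectifiable metric space and
`B` is an `m'`-negligible metric space, then `A × B` (with the sup product metric) is
`(m + m')`-negligible. -/
theorem product_negligible (m m' : ℕ) (A B : Type*) [MetricSpace A] [MetricSpace B]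
    (hA : CountablyRectifiable m (Set.univ : Set A))
    (hB : IsNegligibleSpace B m') :
    IsNegligibleSpace (A × B) (m + m') := by
  classical
  letI : MeasurableSpace B := borel B
  haveI : BorelSpace B := ⟨rfl⟩
  have hB' : μH[(m' : ℝ)] (Set.univ : Set B) = 0 := hB
  letI : MeasurableSpace (A × B) := borel (A × B)
  haveI : BorelSpace (A × B) := ⟨rfl⟩
  show μH[(m + m' : ℝ)] (Set.univ : Set (A × B)) = 0
  rcases Nat.eq_zero_or_pos m' with hm0 | hm'
  · subst hm0
    haveI : IsEmpty B := by
      rw [← not_nonempty_iff]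
      rintro ⟨y⟩
      have h1 : (1 : ENNReal) ≤ μH[(0 : ℝ)] (Set.univ : Set B) :=
        MeasureTheory.Measure.one_le_hausdorffMeasure_zero_of_nonempty ⟨y, trivial⟩
      rw [show ((0 : ℕ) : ℝ) = (0 : ℝ) by norm_num] at hB'
      rw [hB'] at h1
      simp at h1
    have huniv : (Set.univ : Set (A × B)) = ∅ := Set.univ_eq_empty_iff.2 inferInstance
    rw [huniv, measure_empty]
  · obtain ⟨S, f, C, hLip, hU⟩ := hA
    have hd0 : (0 : ℝ) ≤ (m : ℝ) + m' := by positivity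
    letI : MeasurableSpace ((Fin m → ℝ) × B) := borel _
    haveI : BorelSpace ((Fin m → ℝ) × B) := ⟨rfl⟩
    have hcore : μH[(m : ℝ) + m'] (Set.univ : Set ((Fin m → ℝ) × B)) = 0 :=
      pi_prod_null m m' hm' hB'
    letI : MeasurableSpace (EuclideanSpace ℝ (Fin m) × B) := borel _
    haveI : BorelSpace (EuclideanSpace ℝ (Fin m) × B) := ⟨rfl⟩
    -- the identity from (Fin m → ℝ) to Euclidean space is Lipschitz
    have hsymm := (PiLp.antilipschitzWith_ofLp 2 (fun _ : Fin m => ℝ)).to_rightInverse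
      (WithLp.equiv 2 ((Fin m) → ℝ)).right_inv
    have hψ := lipschitzWith_prodMap_left (Y := B) hsymm
    have hψsurj : Function.Surjective
        (Prod.map ((WithLp.equiv 2 ((Fin m) → ℝ)).invFun) (id : B → B)) :=
      ((WithLp.equiv 2 ((Fin m) → ℝ)).symm.surjective).prodMap Function.surjective_id
    have hEuc : μH[(m : ℝ) + m'] (Set.univ : Set (EuclideanSpace ℝ (Fin m) × B)) = 0 := by
      refine le_antisymm ?_ zero_le
      have himg := hψ.hausdorffMeasure_image_le hd0 (Set.univ : Set ((Fin m → ℝ) × B))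
      rw [Set.image_univ, hψsurj.range_eq] at himg
      calc μH[(m : ℝ) + m'] (Set.univ : Set (EuclideanSpace ℝ (Fin m) × B))
          ≤ _ * μH[(m : ℝ) + m'] (Set.univ : Set ((Fin m → ℝ) × B)) := himg
        _ = 0 := by rw [hcore, mul_zero]
    have huniv : (Set.univ : Set (A × B)) = ⋃ i, Set.range (f i) ×ˢ (Set.univ : Set B) := by
      rw [← Set.univ_prod_univ, hU, Set.iUnion_prod_const]
    rw [huniv]
    refine measure_iUnion_null fun i => ?_
    letI : MeasurableSpace (↥(S i) × B) := borel _
    haveI : BorelSpace (↥(S i) × B) := ⟨rfl⟩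
    have hglip := lipschitzWith_prodMap_left (Y := B) (hLip i)
    have h1 : Set.range (Prod.map (f i) (id : B → B)) =
        Set.range (f i) ×ˢ (Set.univ : Set B) := by
      rw [Set.range_prodMap, Set.range_id]
    have h2 := hglip.hausdorffMeasure_image_le hd0 (Set.univ : Set (↥(S i) × B))
    rw [Set.image_univ, h1] at h2
    have hiso : Isometry (Prod.map (Subtype.val : S i → EuclideanSpace ℝ (Fin m))
        (id : B → B)) :=
      isometry_subtype_coe.prodMap isometry_id
    have h3 : μH[(m : ℝ) + m'] (Set.univ : Set (↥(S i) × B)) ≤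
        μH[(m : ℝ) + m'] (Set.univ : Set (EuclideanSpace ℝ (Fin m) × B)) := by
      calc μH[(m : ℝ) + m'] (Set.univ : Set (↥(S i) × B))
          = μH[(m : ℝ) + m'] (Prod.map (Subtype.val : S i → EuclideanSpace ℝ (Fin m))
              (id : B → B) '' Set.univ) :=
            (hiso.hausdorffMeasure_image (Or.inl hd0) _).symm
        _ ≤ μH[(m : ℝ) + m'] (Set.univ : Set (EuclideanSpace ℝ (Fin m) × B)) :=
            measure_mono (Set.subset_univ _)
    refine le_antisymm ?_ zero_le
    calc μH[(m + m' : ℝ)] (Set.range (f i) ×ˢ (Set.univ : Set B))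
        ≤ _ * μH[(m : ℝ) + m'] (Set.univ : Set (↥(S i) × B)) := h2
      _ ≤ _ * μH[(m : ℝ) + m'] (Set.univ : Set (EuclideanSpace ℝ (Fin m) × B)) := by gcongr
      _ = 0 := by rw [hEuc, mul_zero]
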